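/- Let h > 0 and k(τ, μ) = (2(τ² + h²(1+μ²))τ + (h²−1)(1+μ²)μ)/((1+r²)(h²+r²)) with r² = τ² + μ². Along any solution of τ' = 1 + kμ, μ' = −kτ, if k vanishes at some s₁, then the derivative of s ↦ k(τ(s), μ(s)) at s₁ equals (6τ²(s₁) + 2h²(1 + μ²(s₁)))/((1 + r²(s₁))(h² + r²(s₁))) > 0. Hence along any solution, k has at most one zero, being negative before it and positive after. -/

import Mathlib

open Filter Topology

/-- The curvature function of the generating curve of an `h`-pitched helicoidal
rotator to MCF in `ℍ²×ℝ`. -/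
noncomputable def kF (h τ μ : ℝ) : ℝ :=
  (2 * (τ ^ 2 + h ^ 2 * (1 + μ ^ 2)) * τ + (h ^ 2 - 1) * (1 + μ ^ 2) * μ) /
    ((1 + (τ ^ 2 + μ ^ 2)) * (h ^ 2 + (τ ^ 2 + μ ^ 2)))

/-- `(τ, μ)` is a (global) solution of the rotator ODE system
`τ′ = 1 + kμ`, `μ′ = −kτ`. -/
def IsSol (h : ℝ) (τ μ : ℝ → ℝ) : Prop :=
  ∀ s : ℝ,
    HasDerivAt τ (1 + kF h (τ s) (μ s) * μ s) s ∧
    HasDerivAt μ (-(kF h (τ s) (μ s) * τ s)) s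

/-- At a zero of the curvature along a solution, the derivative of the curvature
along the solution is the stated expression. -/
lemma kF_key_deriv (h : ℝ) (hh : 0 < h) (τ μ : ℝ → ℝ) (hsol : IsSol h τ μ) (s : ℝ)
    (hz : kF h (τ s) (μ s) = 0) :
    HasDerivAt (fun s => kF h (τ s) (μ s))
      ((6 * τ s ^ 2 + 2 * h ^ 2 * (1 + μ s ^ 2)) /
        ((1 + (τ s ^ 2 + μ s ^ 2)) * (h ^ 2 + (τ s ^ 2 + μ s ^ 2)))) s := by
  have hτ' : HasDerivAt τ 1 s := by
    have := (hsol s).1; rw [hz] at this; simpa using this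
  have hμ' : HasDerivAt μ 0 s := by
    have := (hsol s).2; rw [hz] at this; simpa using this
  have hQpos : 0 < (1 + (τ s ^ 2 + μ s ^ 2)) * (h ^ 2 + (τ s ^ 2 + μ s ^ 2)) := by positivity
  have hN0 : 2 * (τ s ^ 2 + h ^ 2 * (1 + μ s ^ 2)) * τ s + (h ^ 2 - 1) * (1 + μ s ^ 2) * μ s = 0 := by
    unfold kF at hz
    exact (div_eq_zero_iff.mp hz).resolve_right hQpos.ne'
  have hτ2 : HasDerivAt (fun s => τ s ^ 2) (2 * τ s) s := by simpa using hτ'.fun_pow 2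
  have hμ2 : HasDerivAt (fun s => μ s ^ 2) (0 : ℝ) s := by simpa using hμ'.fun_pow 2
  have hA : HasDerivAt (fun s => τ s ^ 2 + h ^ 2 * (1 + μ s ^ 2)) (2 * τ s) s := by
    have := hτ2.fun_add (HasDerivAt.const_mul (h ^ 2) ((hasDerivAt_const s (1:ℝ)).fun_add hμ2))
    simpa using this
  have hB : HasDerivAt (fun s => (1 + μ s ^ 2) * μ s) (0 : ℝ) s := by
    have := ((hasDerivAt_const s (1:ℝ)).fun_add hμ2).fun_mul hμ'
    simpa using this
  have hN : HasDerivAt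
      (fun s => 2 * (τ s ^ 2 + h ^ 2 * (1 + μ s ^ 2)) * τ s + (h ^ 2 - 1) * (1 + μ s ^ 2) * μ s)
      (6 * τ s ^ 2 + 2 * h ^ 2 * (1 + μ s ^ 2)) s := by
    have := (HasDerivAt.const_mul 2 (hA.fun_mul hτ')).fun_add (HasDerivAt.const_mul (h ^ 2 - 1) hB)
    convert this using 1
    · rfl
    · rfl
    · funext t; ring
    · ring
  have hr : HasDerivAt (fun s => τ s ^ 2 + μ s ^ 2) (2 * τ s) s := by simpa using hτ2.fun_add hμ2
  have hQ := ((hasDerivAt_const s (1:ℝ)).fun_add hr).fun_mul ((hasDerivAt_const s (h ^ 2)).fun_add hr)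
  simp only [zero_add] at hQ
  have hf := hN.fun_div hQ hQpos.ne'
  unfold kF
  convert hf using 1
  · rfl
  · rfl
  rw [hN0]
  field_simp
  ring

/-- Near a transversal zero (positive derivative), a function is positive just to
the right and negative just to the left. -/
lemma kF_local_sign {f : ℝ → ℝ} {s D : ℝ} (h0 : f s = 0) (hD : 0 < D)
    (hf : HasDerivAt f D s) :
    ∃ δ > 0, (∀ t, s < t → t < s + δ → 0 < f t) ∧ (∀ t, s - δ < t → t < s → f t < 0) := by
  have hslope : Tendsto (slope f s) (𝓝[≠] s) (𝓝 D) :=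
    hasDerivAt_iff_tendsto_slope.mp hf
  have hev : ∀ᶠ t in 𝓝[≠] s, 0 < slope f s t := hslope.eventually_const_lt hD
  rw [eventually_nhdsWithin_iff] at hev
  rw [Metric.eventually_nhds_iff] at hev
  obtain ⟨δ, hδ, hδ'⟩ := hev
  refine ⟨δ, hδ, ?_, ?_⟩
  · intro t ht1 ht2
    have hne : t ∈ ({s}ᶜ : Set ℝ) := by simp [ht1.ne']
    have hs : 0 < slope f s t := hδ' (by rw [Real.dist_eq, abs_lt]; constructor <;> linarith) hne
    rw [slope_def_field, h0] at hs
    have htp : 0 < t - s := by linarith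
    have := mul_pos hs htp
    rw [div_mul_cancel₀] at this
    · simpa using this
    · exact htp.ne'
  · intro t ht1 ht2
    have hne : t ∈ ({s}ᶜ : Set ℝ) := by simp [ht2.ne]
    have hs : 0 < slope f s t := hδ' (by rw [Real.dist_eq, abs_lt]; constructor <;> linarith) hne
    rw [slope_def_field, h0] at hs
    have htp : t - s < 0 := by linarith
    rcases div_pos_iff.mp hs with ⟨_, h⟩ | ⟨h, _⟩
    · linarith
    · linarith

/-- A continuous function all of whose zeros are transversal with positive
derivative is positive to the right of any zero. -/
lemma kF_right_pos {f : ℝ → ℝ} (hc : Continuous f)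
    (hd : ∀ s, f s = 0 → ∃ D, 0 < D ∧ HasDerivAt f D s)
    {s₁ : ℝ} (h0 : f s₁ = 0) : ∀ s, s₁ < s → 0 < f s := by
  intro s₂ hs
  by_contra hle
  push_neg at hle
  obtain ⟨D, hD, hDf⟩ := hd s₁ h0
  obtain ⟨δ₁, hδ₁, hpos, _⟩ := kF_local_sign h0 hD hDf
  set t₀ : ℝ := min (s₁ + δ₁ / 2) ((s₁ + s₂) / 2) with ht₀
  have h1 : s₁ < t₀ := by simp [ht₀]; constructor <;> linarith
  have h2 : t₀ < s₂ := lt_of_le_of_lt (min_le_right _ _) (by linarith)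
  have h3 : t₀ < s₁ + δ₁ := lt_of_le_of_lt (min_le_left _ _) (by linarith)
  have ht₀pos : 0 < f t₀ := hpos t₀ h1 h3
  set A : Set ℝ := Set.Icc t₀ s₂ ∩ f ⁻¹' (Set.Iic 0) with hA
  have hAne : A.Nonempty := ⟨s₂, ⟨h2.le, le_refl _⟩, hle⟩
  have hAcl : IsClosed A := isClosed_Icc.inter (IsClosed.preimage hc isClosed_Iic)
  have hAbd : BddBelow A := ⟨t₀, fun x hx => hx.1.1⟩
  have hcA : sInf A ∈ A := hAcl.csInf_mem hAne hAbd
  set c := sInf A with hcdef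
  have hct₀ : t₀ ≤ c := hcA.1.1
  have hcs₂ : c ≤ s₂ := hcA.1.2
  have hfc_le : f c ≤ 0 := hcA.2
  have hct₀' : t₀ < c := lt_of_le_of_ne hct₀
    (by intro heq; rw [← heq] at hfc_le; exact absurd hfc_le (not_le.mpr ht₀pos))
  have hbetween : ∀ x, t₀ ≤ x → x < c → 0 < f x := by
    intro x hx1 hx2
    by_contra hx
    push_neg at hx
    have : x ∈ A := ⟨⟨hx1, by linarith⟩, hx⟩
    exact absurd (csInf_le hAbd this) (not_le.mpr hx2)
  have hfc0 : f c = 0 := by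
    by_contra hne
    have hneg : f c < 0 := lt_of_le_of_ne hfc_le hne
    have hcont : ContinuousAt f c := hc.continuousAt
    rw [Metric.continuousAt_iff] at hcont
    obtain ⟨ε, hε, hε'⟩ := hcont (-(f c)) (by linarith)
    set x := max t₀ (c - ε / 2) with hx
    have hx1 : t₀ ≤ x := le_max_left _ _
    have hx2 : x < c := by
      apply max_lt hct₀'; linarith
    have hdist : dist x c < ε := by
      rw [Real.dist_eq, abs_lt]
      constructor
      · have : c - ε / 2 ≤ x := le_max_right _ _; linarith
      · linarith
    have := hε' hdist
    rw [Real.dist_eq, abs_lt] at this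
    have := hbetween x hx1 hx2
    linarith [this]
  obtain ⟨D', hD', hDf'⟩ := hd c hfc0
  obtain ⟨δc, hδc, _, hneg'⟩ := kF_local_sign hfc0 hD' hDf'
  set x := max t₀ (c - δc / 2) with hx
  have hx1 : t₀ ≤ x := le_max_left _ _
  have hx2 : x < c := max_lt hct₀' (by linarith)
  have hx3 : c - δc < x := by
    have : c - δc / 2 ≤ x := le_max_right _ _; linarith
  exact absurd (hbetween x hx1 hx2) (not_lt.mpr (hneg' x hx3 hx2).le)

/-- along a solution, if the curvature `k` vanishes at `s₁`, then the
derivative of `s ↦ k(τ(s), μ(s))` at `s₁` equals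
`(6τ(s₁)² + 2h²(1 + μ(s₁)²))/((1 + r²(s₁))(h² + r²(s₁))) > 0`; hence `k` has at most
one zero along the solution, being negative before it and positive after it. -/
theorem k_zero_behaviour (h : ℝ) (hh : 0 < h) (τ μ : ℝ → ℝ)
    (hsol : IsSol h τ μ) (s₁ : ℝ) (hzero : kF h (τ s₁) (μ s₁) = 0) :
    deriv (fun s => kF h (τ s) (μ s)) s₁ =
      (6 * τ s₁ ^ 2 + 2 * h ^ 2 * (1 + μ s₁ ^ 2)) /
        ((1 + (τ s₁ ^ 2 + μ s₁ ^ 2)) * (h ^ 2 + (τ s₁ ^ 2 + μ s₁ ^ 2))) ∧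
    0 < deriv (fun s => kF h (τ s) (μ s)) s₁ ∧
    (∀ s : ℝ, s < s₁ → kF h (τ s) (μ s) < 0) ∧
    (∀ s : ℝ, s₁ < s → 0 < kF h (τ s) (μ s)) := by
  set f : ℝ → ℝ := fun s => kF h (τ s) (μ s) with hf
  have hderiv : deriv f s₁ =
      (6 * τ s₁ ^ 2 + 2 * h ^ 2 * (1 + μ s₁ ^ 2)) /
        ((1 + (τ s₁ ^ 2 + μ s₁ ^ 2)) * (h ^ 2 + (τ s₁ ^ 2 + μ s₁ ^ 2))) :=
    (kF_key_deriv h hh τ μ hsol s₁ hzero).deriv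
  have hd : ∀ s, f s = 0 → ∃ D, 0 < D ∧ HasDerivAt f D s := by
    intro s hz
    exact ⟨_, by positivity, kF_key_deriv h hh τ μ hsol s hz⟩
  have hτd : Differentiable ℝ τ := fun s => ((hsol s).1).differentiableAt
  have hμd : Differentiable ℝ μ := fun s => ((hsol s).2).differentiableAt
  have hτc : Continuous τ := hτd.continuous
  have hμc : Continuous μ := hμd.continuous
  have hcf : Continuous f := by
    rw [hf]
    unfold kF
    apply Continuous.div
    · fun_prop
    · fun_prop
    · intro s
      have : 0 < (1 + (τ s ^ 2 + μ s ^ 2)) * (h ^ 2 + (τ s ^ 2 + μ s ^ 2)) := by positivity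
      exact this.ne'
  refine ⟨hderiv, ?_, ?_, kF_right_pos hcf hd hzero⟩
  · rw [hderiv]; positivity
  · -- left side via reflection
    set g : ℝ → ℝ := fun u => -f (-u) with hg
    have hgc : Continuous g := (hcf.comp continuous_neg).neg
    have hgd : ∀ u, g u = 0 → ∃ D, 0 < D ∧ HasDerivAt g D u := by
      intro u hu
      have hfz : f (-u) = 0 := by
        have : -f (-u) = 0 := hu
        linarith
      obtain ⟨D, hD, hDf⟩ := hd (-u) hfz
      refine ⟨D, hD, ?_⟩
      have := (hDf.comp u (hasDerivAt_neg u)).neg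
      have h2 : -(D * -1) = D := by ring
      rw [h2] at this
      exact this
    have hfz₁ : f s₁ = 0 := hzero
    have hg0 : g (-s₁) = 0 := by simp [hg, neg_neg, hfz₁]
    have := kF_right_pos hgc hgd hg0
    intro s hs
    have h1 : -s₁ < -s := by linarith
    have h2 : 0 < g (-s) := this (-s) h1
    have h3 : g (-s) = -f s := by simp [hg]
    rw [h3] at h2
    linarith
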